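/- Under the general pressure law hypotheses there exist a constant C ≥ 1 and a threshold ρ₁ ≥ ρ* such that for all ρ ≥ ρ₁: C⁻¹ρ^{γ₂} ≤ P(ρ) ≤ Cρ^{γ₂}, C⁻¹ρ^{γ₂−1} ≤ P′(ρ) ≤ Cρ^{γ₂−1}, C⁻¹ρ^{γ₂−1} ≤ e(ρ) ≤ Cρ^{γ₂−1}, C⁻¹ρ^{γ₂−2} ≤ e′(ρ) ≤ Cρ^{γ₂−2}, and C⁻¹ρ^{θ₂} ≤ K(ρ) ≤ Cρ^{θ₂}, where θ₂ = (γ₂−1)/2. -/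

import Mathlib

open Real Set
open MeasureTheory intervalIntegral

section Aux

lemma aux_min_rpow {a b y r : ℝ} (ha : 0 < a) (hay : a ≤ y) (hyb : y ≤ b) :
    min (a ^ r) (b ^ r) ≤ y ^ r := by
  rcases le_or_gt 0 r with hr | hr
  · exact le_trans (min_le_left _ _) (Real.rpow_le_rpow ha.le hay hr)
  · exact le_trans (min_le_right _ _) (Real.rpow_le_rpow_of_nonpos (ha.trans_le hay) hyb hr.le)

lemma aux_div_sq {y r : ℝ} (hy : 0 < y) : y ^ r / y ^ 2 = y ^ (r - 2) := by
  rw [Real.rpow_sub hy, ← Real.rpow_natCast y 2]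
  norm_num

lemma aux_div_self {y s : ℝ} (hy : 0 < y) : y ^ s / y = y ^ (s - 1) := by
  rw [Real.rpow_sub hy, Real.rpow_one]

lemma aux_sqrt_rpow {c y r : ℝ} (hc : 0 ≤ c) (hy : 0 ≤ y) :
    Real.sqrt (c * y ^ r) = Real.sqrt c * y ^ (r / 2) := by
  rw [Real.sqrt_mul hc, Real.sqrt_eq_rpow (y ^ r), ← Real.rpow_mul hy]
  congr 1
  ring

lemma aux_intervalIntegrable {f : ℝ → ℝ} {A M r : ℝ} (hA : 0 < A) (hr : -1 < r)
    (hc : ContinuousOn f (Ioc 0 A)) (hb : ∀ y ∈ Ioc (0:ℝ) A, ‖f y‖ ≤ M * y ^ r) :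
    IntervalIntegrable f volume 0 A := by
  rw [intervalIntegrable_iff_integrableOn_Ioc_of_le hA.le]
  have hint : IntegrableOn (fun y => M * y ^ r) (Ioc 0 A) volume := by
    have := (intervalIntegral.intervalIntegrable_rpow' (a := 0) (b := A) hr).const_mul M
    rwa [intervalIntegrable_iff_integrableOn_Ioc_of_le hA.le] at this
  exact hint.integrable.mono' (hc.aestronglyMeasurable measurableSet_Ioc)
    ((ae_restrict_iff' measurableSet_Ioc).2 (Filter.Eventually.of_forall hb))

lemma aux_combine {c D C x v : ℝ} (hc : 0 < c) (hC : c⁻¹ ≤ C) (hD : D ≤ C) (hx : 0 ≤ x)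
    (h1 : c * x ≤ v) (h2 : v ≤ D * x) : C⁻¹ * x ≤ v ∧ v ≤ C * x := by
  have hCinv : C⁻¹ ≤ c := by
    have := inv_anti₀ (inv_pos.2 hc) hC
    rwa [inv_inv] at this
  exact ⟨le_trans (mul_le_mul_of_nonneg_right hCinv hx) h1,
    le_trans h2 (mul_le_mul_of_nonneg_right hD hx)⟩

lemma aux_rpow_int {a ρ c r : ℝ} (hr : -1 < r) :
    ∫ y in a..ρ, c * y ^ r = c * ((ρ ^ (r+1) - a ^ (r+1)) / (r+1)) := by
  rw [intervalIntegral.integral_const_mul, integral_rpow (Or.inl hr)]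

lemma aux_frac {κ g X Y : ℝ} (hκ : 0 ≤ κ) (hg : 0 < g) (hY : Y ≤ X / 2) :
    κ / (4 * g) * X ≤ κ / 2 * ((X - Y) / g) := by
  have e1 : κ / 2 * ((X - Y) / g) - κ / (4 * g) * X = (κ * (2 * (X - Y) - X)) / (4 * g) := by
    field_simp
    ring
  have e2 : (0:ℝ) ≤ (κ * (2 * (X - Y) - X)) / (4 * g) :=
    div_nonneg (mul_nonneg hκ (by linarith)) (by linarith)
  linarith

lemma aux_frac2 {κ g X Y : ℝ} (hκ : 0 ≤ κ) (hg : 0 < g) (hY : 0 ≤ Y) :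
    κ / 2 * ((X - Y) / g) ≤ κ / (2 * g) * X := by
  have e1 : κ / (2 * g) * X - κ / 2 * ((X - Y) / g) = (κ * Y) / (2 * g) := by
    field_simp
    ring
  have e2 : (0:ℝ) ≤ (κ * Y) / (2 * g) := div_nonneg (mul_nonneg hκ hY) (by linarith)
  linarith

end Aux

/-- General pressure law hypotheses: `P ∈ C¹([0,∞)) ∩ C⁴((0,∞))`, strict hyperbolicity and
genuine nonlinearity for `ρ > 0`, and power-law expansions near the vacuum and the far field. -/
structure GeneralPressureLaw (P : ℝ → ℝ) (ρs ρS γ₁ γ₂ κ₁ κ₂ b Cs CS : ℝ) : Prop where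
  ρs_pos : 0 < ρs
  ρs_lt_ρS : ρs < ρS
  one_lt_γ₂ : 1 < γ₂
  γ₂_le_γ₁ : γ₂ ≤ γ₁
  γ₁_lt_three : γ₁ < 3
  κ₁_pos : 0 < κ₁
  κ₂_pos : 0 < κ₂
  b_pos : 0 < b
  Cs_pos : 0 < Cs
  CS_pos : 0 < CS
  smooth_C1 : ContDiffOn ℝ 1 P (Ici 0)
  smooth_C4 : ContDiffOn ℝ 4 P (Ioi 0)
  deriv_pos : ∀ ρ : ℝ, 0 < ρ → 0 < deriv P ρ
  genuinely_nonlinear : ∀ ρ : ℝ, 0 < ρ → 0 < 2 * deriv P ρ + ρ * deriv (deriv P) ρ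
  expansion : ∃ P₁ P₂ : ℝ → ℝ,
    ContDiffOn ℝ 4 P₁ (Ioi 0) ∧ ContDiffOn ℝ 4 P₂ (Ioi 0) ∧
    (∀ ρ : ℝ, 0 ≤ ρ → ρ < ρs → P ρ = κ₁ * ρ ^ γ₁ * (1 + P₁ ρ)) ∧
    (∀ ρ : ℝ, ρS ≤ ρ → P ρ = κ₂ * ρ ^ γ₂ * (1 + P₂ ρ)) ∧
    (∀ n : ℕ, n ≤ 4 → ∀ ρ : ℝ, 0 < ρ → ρ < ρs →
      |iteratedDeriv n P₁ ρ| ≤ Cs * ρ ^ (γ₁ - 1 - (n : ℝ))) ∧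
    (∀ n : ℕ, n ≤ 4 → ∀ ρ : ℝ, ρS ≤ ρ →
      |iteratedDeriv n P₂ ρ| ≤ CS * ρ ^ (-b - (n : ℝ)))

/-- The internal energy `e(ρ) = ∫₀^ρ P(y)/y² dy`. -/
noncomputable def internalEnergy (P : ℝ → ℝ) (ρ : ℝ) : ℝ := ∫ y in (0:ℝ)..ρ, P y / y ^ 2

/-- The function `K(ρ) = ∫₀^ρ √(P'(y))/y dy`. -/
noncomputable def Kfun (P : ℝ → ℝ) (ρ : ℝ) : ℝ := ∫ y in (0:ℝ)..ρ, Real.sqrt (deriv P y) / y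

set_option maxHeartbeats 4000000 in
/-- Under the general pressure law hypotheses, at large densities the pressure, its derivative,
the internal energy, its derivative, and `K` are comparable to the corresponding powers of `ρ`
with exponent determined by `γ₂` (where `θ₂ = (γ₂ - 1)/2`). -/
theorem pressure_energy_bounds_at_large_density
    (P : ℝ → ℝ) (ρs ρS γ₁ γ₂ κ₁ κ₂ b Cs CS : ℝ)
    (h : GeneralPressureLaw P ρs ρS γ₁ γ₂ κ₁ κ₂ b Cs CS) :
    ∃ C : ℝ, 1 ≤ C ∧ ∃ ρ₁ : ℝ, ρS ≤ ρ₁ ∧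
      ∀ ρ : ℝ, ρ₁ ≤ ρ →
        C⁻¹ * ρ ^ γ₂ ≤ P ρ ∧ P ρ ≤ C * ρ ^ γ₂ ∧
        C⁻¹ * ρ ^ (γ₂ - 1) ≤ deriv P ρ ∧ deriv P ρ ≤ C * ρ ^ (γ₂ - 1) ∧
        C⁻¹ * ρ ^ (γ₂ - 1) ≤ internalEnergy P ρ ∧ internalEnergy P ρ ≤ C * ρ ^ (γ₂ - 1) ∧
        C⁻¹ * ρ ^ (γ₂ - 2) ≤ deriv (internalEnergy P) ρ ∧
          deriv (internalEnergy P) ρ ≤ C * ρ ^ (γ₂ - 2) ∧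
        C⁻¹ * ρ ^ ((γ₂ - 1) / 2) ≤ Kfun P ρ ∧ Kfun P ρ ≤ C * ρ ^ ((γ₂ - 1) / 2) := by
  obtain ⟨P₁, P₂, hP₁s, hP₂s, hexp₁, hexp₂, hbd₁, hbd₂⟩ := h.expansion
  have hγ₂1 : (1:ℝ) < γ₂ := h.one_lt_γ₂
  have hγ₁1 : (1:ℝ) < γ₁ := lt_of_lt_of_le hγ₂1 h.γ₂_le_γ₁
  have hκ₂ : (0:ℝ) < κ₂ := h.κ₂_pos
  have hκ₁ : (0:ℝ) < κ₁ := h.κ₁_pos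
  have hCs : (0:ℝ) < Cs := h.Cs_pos
  have hCS : (0:ℝ) < CS := h.CS_pos
  have hb : (0:ℝ) < b := h.b_pos
  have hρs : (0:ℝ) < ρs := h.ρs_pos
  have hρS : (0:ℝ) < ρS := lt_trans hρs h.ρs_lt_ρS
  -- Basic facts on P
  have hPcont : ContinuousOn P (Ici 0) := h.smooth_C1.continuousOn
  have hPmono : StrictMonoOn P (Ici 0) :=
    strictMonoOn_of_deriv_pos (convex_Ici 0) hPcont
      (fun x hx => h.deriv_pos x (by simpa using hx))
  have hP0 : P 0 = 0 := by
    rw [hexp₁ 0 le_rfl hρs, Real.zero_rpow (by linarith : γ₁ ≠ 0)]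
    ring
  have hPpos : ∀ y : ℝ, 0 < y → 0 < P y := by
    intro y hy
    have := hPmono (mem_Ici.2 le_rfl) (mem_Ici.2 hy.le) hy
    rwa [hP0] at this
  have hPnonneg : ∀ y : ℝ, 0 ≤ y → 0 ≤ P y := by
    intro y hy
    rcases eq_or_lt_of_le hy with rfl | hy'
    · exact le_of_eq hP0.symm
    · exact (hPpos y hy').le
  have hP'cont : ContinuousOn (deriv P) (Ioi 0) :=
    h.smooth_C4.continuousOn_deriv_of_isOpen isOpen_Ioi (by norm_num)
  -- bounds on P₁, P₂ and their derivatives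
  have hP₁bd : ∀ y : ℝ, 0 < y → y < ρs → |P₁ y| ≤ Cs * y ^ (γ₁ - 1) := by
    intro y hy hys
    have h0 := hbd₁ 0 (by norm_num) y hy hys
    rw [iteratedDeriv_zero] at h0
    have : γ₁ - 1 - ((0:ℕ):ℝ) = γ₁ - 1 := by norm_num
    rwa [this] at h0
  have hP₁'bd : ∀ y : ℝ, 0 < y → y < ρs → |deriv P₁ y| ≤ Cs * y ^ (γ₁ - 2) := by
    intro y hy hys
    have h0 := hbd₁ 1 (by norm_num) y hy hys
    rw [iteratedDeriv_one] at h0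
    have : γ₁ - 1 - ((1:ℕ):ℝ) = γ₁ - 2 := by push_cast; ring
    rwa [this] at h0
  have hP₂bd : ∀ ρ : ℝ, ρS ≤ ρ → |P₂ ρ| ≤ CS * ρ ^ (-b) := by
    intro ρ hρ
    have h0 := hbd₂ 0 (by norm_num) ρ hρ
    rw [iteratedDeriv_zero] at h0
    have : -b - ((0:ℕ):ℝ) = -b := by norm_num
    rwa [this] at h0
  have hP₂'bd : ∀ ρ : ℝ, ρS ≤ ρ → |deriv P₂ ρ| ≤ CS * ρ ^ (-b - 1) := by
    intro ρ hρ
    have h0 := hbd₂ 1 (by norm_num) ρ hρ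
    rw [iteratedDeriv_one] at h0
    have : -b - ((1:ℕ):ℝ) = -b - 1 := by push_cast; ring
    rwa [this] at h0
  -- choice of ρ₀
  set ε : ℝ := min (1/2) (γ₂/4) with hεdef
  have hε : 0 < ε := lt_min (by norm_num) (by linarith)
  have hε2 : ε ≤ 1/2 := min_le_left _ _
  have hε4 : ε ≤ γ₂/4 := min_le_right _ _
  set ρ₀ : ℝ := max (max (ρS + 1) 1) ((CS/ε) ^ (1/b)) with hρ₀def
  have hρ₀S : ρS < ρ₀ :=
    lt_of_lt_of_le (by linarith) (le_trans (le_max_left _ _) (le_max_left _ _))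
  have hρ₀1 : (1:ℝ) ≤ ρ₀ := le_trans (le_max_right _ _) (le_max_left _ _)
  have hρ₀pos : (0:ℝ) < ρ₀ := lt_of_lt_of_le one_pos hρ₀1
  have hsmall : ∀ ρ : ℝ, ρ₀ ≤ ρ → CS * ρ ^ (-b) ≤ ε := by
    intro ρ hρ
    have hρpos : 0 < ρ := lt_of_lt_of_le hρ₀pos hρ
    have hq : 0 < CS / ε := div_pos hCS hε
    have h1 : CS / ε ≤ ρ ^ b := by
      calc CS / ε = ((CS/ε) ^ (1/b)) ^ b := by
            rw [← Real.rpow_mul hq.le, one_div, inv_mul_cancel₀ (ne_of_gt hb), Real.rpow_one]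
        _ ≤ ρ ^ b := Real.rpow_le_rpow (Real.rpow_nonneg hq.le _)
            (le_trans (le_max_right _ _) hρ) hb.le
    have h2 : (ρ ^ b)⁻¹ ≤ (CS/ε)⁻¹ := inv_anti₀ hq h1
    have h3 := mul_le_mul_of_nonneg_left h2 hCS.le
    rw [Real.rpow_neg hρpos.le]
    calc CS * (ρ ^ b)⁻¹ ≤ CS * (CS/ε)⁻¹ := h3
      _ = ε := by field_simp
  clear_value ρ₀
  clear_value ε
  -- far field bounds on P
  have hPbig : ∀ ρ : ℝ, ρ₀ ≤ ρ → κ₂/2 * ρ ^ γ₂ ≤ P ρ ∧ P ρ ≤ 3*κ₂/2 * ρ ^ γ₂ := by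
    intro ρ hρ
    have hρpos : 0 < ρ := lt_of_lt_of_le hρ₀pos hρ
    have hρS' : ρS ≤ ρ := le_trans hρ₀S.le hρ
    have habs : |P₂ ρ| ≤ 1/2 := le_trans (le_trans (hP₂bd ρ hρS') (hsmall ρ hρ)) hε2
    have habs' := abs_le.1 habs
    rw [hexp₂ ρ hρS']
    have hpow : 0 < ρ ^ γ₂ := Real.rpow_pos_of_pos hρpos _
    constructor
    · nlinarith [mul_le_mul_of_nonneg_left habs'.1 (by positivity : (0:ℝ) ≤ κ₂ * ρ ^ γ₂)]
    · nlinarith [mul_le_mul_of_nonneg_left habs'.2 (by positivity : (0:ℝ) ≤ κ₂ * ρ ^ γ₂)]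
  -- far field bounds on deriv P
  have hP'big : ∀ ρ : ℝ, ρ₀ ≤ ρ →
      κ₂*γ₂/4 * ρ ^ (γ₂-1) ≤ deriv P ρ ∧ deriv P ρ ≤ 2*κ₂*γ₂ * ρ ^ (γ₂-1) := by
    intro ρ hρ
    have hρpos : 0 < ρ := lt_of_lt_of_le hρ₀pos hρ
    have hρS' : ρS < ρ := lt_of_lt_of_le hρ₀S hρ
    have hP₂diff : DifferentiableAt ℝ P₂ ρ :=
      (hP₂s.contDiffAt (Ioi_mem_nhds hρpos)).differentiableAt (by norm_num)
    have hrpow : HasDerivAt (fun y : ℝ => y ^ γ₂) (γ₂ * ρ ^ (γ₂ - 1)) ρ :=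
      Real.hasDerivAt_rpow_const (Or.inl (ne_of_gt hρpos))
    have hQ : HasDerivAt (fun y : ℝ => κ₂ * y ^ γ₂ * (1 + P₂ y))
        (κ₂ * (γ₂ * ρ ^ (γ₂ - 1)) * (1 + P₂ ρ) + κ₂ * ρ ^ γ₂ * deriv P₂ ρ) ρ := by
      have h1 := (hrpow.const_mul κ₂).mul (hP₂diff.hasDerivAt.const_add 1)
      refine h1.congr_deriv ?_
      ring
    have heq : deriv P ρ = κ₂ * (γ₂ * ρ ^ (γ₂ - 1)) * (1 + P₂ ρ) + κ₂ * ρ ^ γ₂ * deriv P₂ ρ := by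
      have hev : P =ᶠ[nhds ρ] (fun y => κ₂ * y ^ γ₂ * (1 + P₂ y)) :=
        Filter.eventuallyEq_of_mem (Ioi_mem_nhds hρS') (fun y hy => hexp₂ y (le_of_lt hy))
      rw [hev.deriv_eq, hQ.deriv]
    have habs : |P₂ ρ| ≤ 1/2 := le_trans (le_trans (hP₂bd ρ hρS'.le) (hsmall ρ hρ)) hε2
    have habs' := abs_le.1 habs
    have hxpos : 0 < ρ ^ (γ₂ - 1) := Real.rpow_pos_of_pos hρpos _
    have hApos : 0 < ρ ^ γ₂ := Real.rpow_pos_of_pos hρpos _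
    have hvbd : |deriv P₂ ρ| ≤ CS * ρ ^ (-b-1) := hP₂'bd ρ hρS'.le
    have hAv : ρ ^ γ₂ * |deriv P₂ ρ| ≤ γ₂/4 * ρ ^ (γ₂-1) := by
      have e0 : ρ ^ γ₂ * ρ ^ (-b-1) = ρ ^ (-b) * ρ ^ (γ₂-1) := by
        rw [← Real.rpow_add hρpos, ← Real.rpow_add hρpos]
        congr 1
        ring
      have e1 : ρ ^ γ₂ * (CS * ρ ^ (-b-1)) = (CS * ρ ^ (-b)) * ρ ^ (γ₂-1) := by
        calc ρ ^ γ₂ * (CS * ρ ^ (-b-1)) = CS * (ρ ^ γ₂ * ρ ^ (-b-1)) := by ring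
          _ = CS * (ρ ^ (-b) * ρ ^ (γ₂-1)) := by rw [e0]
          _ = (CS * ρ ^ (-b)) * ρ ^ (γ₂-1) := by ring
      calc ρ ^ γ₂ * |deriv P₂ ρ| ≤ ρ ^ γ₂ * (CS * ρ ^ (-b-1)) :=
            mul_le_mul_of_nonneg_left hvbd hApos.le
        _ = (CS * ρ ^ (-b)) * ρ ^ (γ₂-1) := e1
        _ ≤ (γ₂/4) * ρ ^ (γ₂-1) :=
            mul_le_mul_of_nonneg_right (le_trans (hsmall ρ hρ) hε4) hxpos.le
    have h5 : ρ ^ γ₂ * -|deriv P₂ ρ| ≤ ρ ^ γ₂ * deriv P₂ ρ :=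
      mul_le_mul_of_nonneg_left (neg_abs_le _) hApos.le
    have h6 : ρ ^ γ₂ * deriv P₂ ρ ≤ ρ ^ γ₂ * |deriv P₂ ρ| :=
      mul_le_mul_of_nonneg_left (le_abs_self _) hApos.le
    refine ⟨?_, ?_⟩ <;> rw [heq]
    · nlinarith [mul_le_mul_of_nonneg_left habs'.1
        (by positivity : (0:ℝ) ≤ κ₂ * (γ₂ * ρ ^ (γ₂-1)))]
    · nlinarith [mul_le_mul_of_nonneg_left habs'.2
        (by positivity : (0:ℝ) ≤ κ₂ * (γ₂ * ρ ^ (γ₂-1)))]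
  -- vacuum bounds
  set A1 : ℝ := κ₁ * (1 + Cs * ρ₀ ^ (γ₁ - 1)) with hA1def
  clear_value A1
  have hA1pos : 0 < A1 := by
    rw [hA1def]
    have h1 : 0 < ρ₀ ^ (γ₁ - 1) := Real.rpow_pos_of_pos hρ₀pos _
    have h2 := mul_pos hCs h1
    nlinarith [mul_pos hκ₁ h2]
  have hPvac : ∀ y : ℝ, 0 < y → y < ρs → P y ≤ A1 * y ^ γ₁ := by
    intro y hy hys
    have hbd := abs_le.1 (hP₁bd y hy hys)
    have hyρ₀ : y ≤ ρ₀ := le_trans hys.le (le_trans h.ρs_lt_ρS.le hρ₀S.le)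
    have hmono : Cs * y ^ (γ₁ - 1) ≤ Cs * ρ₀ ^ (γ₁ - 1) :=
      mul_le_mul_of_nonneg_left (Real.rpow_le_rpow hy.le hyρ₀ (by linarith)) hCs.le
    have hpow : 0 < y ^ γ₁ := Real.rpow_pos_of_pos hy _
    have hstep := mul_le_mul_of_nonneg_left (le_trans hbd.2 hmono)
      (by positivity : (0:ℝ) ≤ κ₁ * y ^ γ₁)
    rw [hexp₁ y hy.le hys, hA1def]
    nlinarith [hstep]
  set A2 : ℝ := κ₁ * (γ₁ + (γ₁ + 1) * (Cs * ρ₀ ^ (γ₁ - 1))) with hA2def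
  clear_value A2
  have hA2pos : 0 < A2 := by
    rw [hA2def]
    have h1 : 0 < ρ₀ ^ (γ₁ - 1) := Real.rpow_pos_of_pos hρ₀pos _
    have h2 := mul_pos hCs h1
    nlinarith [mul_pos hκ₁ h2, h2, mul_pos hκ₁ (mul_pos (by linarith : (0:ℝ) < γ₁ + 1) h2)]
  have hP'vac : ∀ y : ℝ, 0 < y → y < ρs → deriv P y ≤ A2 * y ^ (γ₁ - 1) := by
    intro y hy hys
    have hP₁diff : DifferentiableAt ℝ P₁ y :=
      (hP₁s.contDiffAt (Ioi_mem_nhds hy)).differentiableAt (by norm_num)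
    have hrpow : HasDerivAt (fun z : ℝ => z ^ γ₁) (γ₁ * y ^ (γ₁ - 1)) y :=
      Real.hasDerivAt_rpow_const (Or.inl (ne_of_gt hy))
    have hQ : HasDerivAt (fun z : ℝ => κ₁ * z ^ γ₁ * (1 + P₁ z))
        (κ₁ * (γ₁ * y ^ (γ₁ - 1)) * (1 + P₁ y) + κ₁ * y ^ γ₁ * deriv P₁ y) y := by
      have h1 := (hrpow.const_mul κ₁).mul (hP₁diff.hasDerivAt.const_add 1)
      refine h1.congr_deriv ?_
      ring
    have heq : deriv P y = κ₁ * (γ₁ * y ^ (γ₁ - 1)) * (1 + P₁ y) + κ₁ * y ^ γ₁ * deriv P₁ y := by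
      have hev : P =ᶠ[nhds y] (fun z => κ₁ * z ^ γ₁ * (1 + P₁ z)) := by
        refine Filter.eventuallyEq_of_mem (IsOpen.mem_nhds isOpen_Ioo ⟨hy, hys⟩) ?_
        intro z hz
        exact hexp₁ z hz.1.le hz.2
      rw [hev.deriv_eq, hQ.deriv]
    have hbdy := abs_le.1 (hP₁bd y hy hys)
    have hbdy' := abs_le.1 (hP₁'bd y hy hys)
    have hyρ₀ : y ≤ ρ₀ := le_trans hys.le (le_trans h.ρs_lt_ρS.le hρ₀S.le)
    have hx1 : 0 < y ^ (γ₁ - 1) := Real.rpow_pos_of_pos hy _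
    have hmono : y ^ (γ₁ - 1) ≤ ρ₀ ^ (γ₁ - 1) :=
      Real.rpow_le_rpow hy.le hyρ₀ (by linarith)
    have e1 : y ^ γ₁ * y ^ (γ₁ - 2) = y ^ (γ₁ - 1) * y ^ (γ₁ - 1) := by
      rw [← Real.rpow_add hy, ← Real.rpow_add hy]
      congr 1
      ring
    have hApos : 0 < y ^ γ₁ := Real.rpow_pos_of_pos hy _
    have h6 : y ^ γ₁ * deriv P₁ y ≤ y ^ γ₁ * (Cs * y ^ (γ₁ - 2)) :=
      mul_le_mul_of_nonneg_left hbdy'.2 hApos.le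
    have h6' : κ₁ * (y ^ γ₁ * deriv P₁ y) ≤ κ₁ * Cs * (y ^ (γ₁-1) * y ^ (γ₁-1)) := by
      calc κ₁ * (y ^ γ₁ * deriv P₁ y) ≤ κ₁ * (y ^ γ₁ * (Cs * y ^ (γ₁-2))) :=
            mul_le_mul_of_nonneg_left h6 hκ₁.le
        _ = κ₁ * Cs * (y ^ γ₁ * y ^ (γ₁-2)) := by ring
        _ = κ₁ * Cs * (y ^ (γ₁-1) * y ^ (γ₁-1)) := by rw [e1]
    have h8 : y ^ (γ₁-1) * y ^ (γ₁-1) ≤ ρ₀ ^ (γ₁-1) * y ^ (γ₁-1) :=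
      mul_le_mul_of_nonneg_right hmono hx1.le
    rw [heq, hA2def]
    have h7 : κ₁ * (γ₁ * y ^ (γ₁-1)) * (1 + P₁ y) ≤
        κ₁ * (γ₁ * y ^ (γ₁-1)) * (1 + Cs * y ^ (γ₁-1)) :=
      mul_le_mul_of_nonneg_left (by linarith [hbdy.2]) (by positivity)
    nlinarith [h7, h6', mul_le_mul_of_nonneg_left h8 (mul_nonneg hκ₁.le hCs.le),
      mul_le_mul_of_nonneg_left hmono (by positivity : (0:ℝ) ≤ κ₁ * γ₁ * Cs * y ^ (γ₁-1))]
  -- integrands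
  have hg_cont : ContinuousOn (fun y => P y / y ^ 2) (Ioi 0) :=
    ContinuousOn.div (hPcont.mono Ioi_subset_Ici_self) (continuous_pow 2).continuousOn
      (fun y hy => pow_ne_zero 2 (ne_of_gt hy))
  have hk_cont : ContinuousOn (fun y => Real.sqrt (deriv P y) / y) (Ioi 0) :=
    ContinuousOn.div (Real.continuous_sqrt.comp_continuousOn hP'cont) continuousOn_id
      (fun y hy => ne_of_gt hy)
  -- integrability of g near zero
  have hg_int0 : IntervalIntegrable (fun y => P y / y ^ 2) volume 0 ρ₀ := by
    set m : ℝ := min (ρs ^ (γ₁ - 2)) (ρ₀ ^ (γ₁ - 2)) with hmdef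
    have hm : 0 < m := lt_min (Real.rpow_pos_of_pos hρs _) (Real.rpow_pos_of_pos hρ₀pos _)
    refine aux_intervalIntegrable (M := A1 + P ρ₀ / ρs ^ 2 / m) hρ₀pos (by linarith : (-1:ℝ) < γ₁ - 2)
      (hg_cont.mono (fun y hy => hy.1)) (fun y hy => ?_)
    obtain ⟨hy0, hyρ₀⟩ := hy
    have hrnn : 0 ≤ y ^ (γ₁ - 2) := (Real.rpow_pos_of_pos hy0 _).le
    have hgnn : 0 ≤ P y / y ^ 2 := div_nonneg (hPnonneg y hy0.le) (sq_nonneg y)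
    rw [Real.norm_eq_abs, abs_of_nonneg hgnn]
    have hBpos : 0 ≤ P ρ₀ / ρs ^ 2 / m :=
      div_nonneg (div_nonneg (hPnonneg ρ₀ hρ₀pos.le) (sq_nonneg ρs)) hm.le
    rcases lt_or_ge y ρs with hys | hys
    · have : P y / y ^ 2 ≤ A1 * y ^ (γ₁ - 2) := by
        calc P y / y ^ 2 ≤ A1 * y ^ γ₁ / y ^ 2 :=
              (div_le_div_iff_of_pos_right (pow_pos hy0 2)).2 (hPvac y hy0 hys)
          _ = A1 * y ^ (γ₁ - 2) := by rw [mul_div_assoc, aux_div_sq hy0]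
      nlinarith [mul_le_mul_of_nonneg_right hBpos hrnn]
    · have hPy : P y ≤ P ρ₀ := hPmono.monotoneOn (mem_Ici.2 hy0.le) (mem_Ici.2 hρ₀pos.le) hyρ₀
      have hyy : ρs ^ 2 ≤ y ^ 2 := by nlinarith
      have hB : P y / y ^ 2 ≤ P ρ₀ / ρs ^ 2 := by
        apply div_le_div₀ (hPnonneg ρ₀ hρ₀pos.le) hPy (by positivity) hyy
      have hmin : m ≤ y ^ (γ₁ - 2) := aux_min_rpow hρs hys hyρ₀
      have : P ρ₀ / ρs ^ 2 ≤ (P ρ₀ / ρs ^ 2 / m) * y ^ (γ₁ - 2) := by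
        rw [div_mul_eq_mul_div, le_div_iff₀ hm]
        exact mul_le_mul_of_nonneg_left hmin
          (div_nonneg (hPnonneg ρ₀ hρ₀pos.le) (sq_nonneg ρs))
      nlinarith [mul_le_mul_of_nonneg_right hA1pos.le hrnn]
  -- integrability of k near zero
  have hk_int0 : IntervalIntegrable (fun y => Real.sqrt (deriv P y) / y) volume 0 ρ₀ := by
    obtain ⟨Cb, hCb⟩ := (isCompact_Icc (a := ρs) (b := ρ₀)).exists_bound_of_continuousOn
      (hP'cont.mono (fun y hy => lt_of_lt_of_le hρs hy.1))
    have hCb0 : 0 ≤ Cb := le_trans (norm_nonneg _) (hCb ρs ⟨le_rfl, le_trans h.ρs_lt_ρS.le hρ₀S.le⟩)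
    set m : ℝ := min (ρs ^ ((γ₁ - 3)/2)) (ρ₀ ^ ((γ₁ - 3)/2)) with hmdef
    have hm : 0 < m := lt_min (Real.rpow_pos_of_pos hρs _) (Real.rpow_pos_of_pos hρ₀pos _)
    refine aux_intervalIntegrable (M := Real.sqrt A2 + Real.sqrt Cb / ρs / m) hρ₀pos
      (by linarith : (-1:ℝ) < (γ₁ - 3)/2)
      (hk_cont.mono (fun y hy => hy.1)) (fun y hy => ?_)
    obtain ⟨hy0, hyρ₀⟩ := hy
    have hrnn : 0 ≤ y ^ ((γ₁ - 3)/2) := (Real.rpow_pos_of_pos hy0 _).le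
    have hknn : 0 ≤ Real.sqrt (deriv P y) / y := div_nonneg (Real.sqrt_nonneg _) hy0.le
    rw [Real.norm_eq_abs, abs_of_nonneg hknn]
    have hBpos : 0 ≤ Real.sqrt Cb / ρs / m :=
      div_nonneg (div_nonneg (Real.sqrt_nonneg _) hρs.le) hm.le
    rcases lt_or_ge y ρs with hys | hys
    · have hsq : Real.sqrt (deriv P y) ≤ Real.sqrt A2 * y ^ ((γ₁-1)/2) := by
        calc Real.sqrt (deriv P y) ≤ Real.sqrt (A2 * y ^ (γ₁ - 1)) :=
              Real.sqrt_le_sqrt (hP'vac y hy0 hys)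
          _ = Real.sqrt A2 * y ^ ((γ₁-1)/2) := aux_sqrt_rpow hA2pos.le hy0.le
      have : Real.sqrt (deriv P y) / y ≤ Real.sqrt A2 * y ^ ((γ₁-3)/2) := by
        calc Real.sqrt (deriv P y) / y ≤ Real.sqrt A2 * y ^ ((γ₁-1)/2) / y :=
              (div_le_div_iff_of_pos_right hy0).2 hsq
          _ = Real.sqrt A2 * y ^ ((γ₁-3)/2) := by
              rw [mul_div_assoc, aux_div_self hy0]
              congr 2
              ring
      nlinarith [mul_le_mul_of_nonneg_right hBpos hrnn]
    · have hDb : deriv P y ≤ Cb := le_trans (le_abs_self _) (hCb y ⟨hys, hyρ₀⟩)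
      have hsq : Real.sqrt (deriv P y) ≤ Real.sqrt Cb := Real.sqrt_le_sqrt hDb
      have hB : Real.sqrt (deriv P y) / y ≤ Real.sqrt Cb / ρs :=
        div_le_div₀ (Real.sqrt_nonneg _) hsq hρs hys
      have hmin : m ≤ y ^ ((γ₁-3)/2) := aux_min_rpow hρs hys hyρ₀
      have : Real.sqrt Cb / ρs ≤ (Real.sqrt Cb / ρs / m) * y ^ ((γ₁-3)/2) := by
        rw [div_mul_eq_mul_div, le_div_iff₀ hm]
        exact mul_le_mul_of_nonneg_left hmin (by positivity)
      nlinarith [mul_le_mul_of_nonneg_right (Real.sqrt_nonneg A2) hrnn]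
  -- nonnegativity at ρ₀
  have he₀ : 0 ≤ internalEnergy P ρ₀ := by
    have h0 : (0:ℝ) ≤ ∫ y in (0:ℝ)..ρ₀, P y / y ^ 2 :=
      intervalIntegral.integral_nonneg hρ₀pos.le
        (fun u hu => div_nonneg (hPnonneg u hu.1) (sq_nonneg u))
    exact h0
  have hK₀ : 0 ≤ Kfun P ρ₀ := by
    have h0 : (0:ℝ) ≤ ∫ y in (0:ℝ)..ρ₀, Real.sqrt (deriv P y) / y :=
      intervalIntegral.integral_nonneg hρ₀pos.le
        (fun u hu => div_nonneg (Real.sqrt_nonneg _) hu.1)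
    exact h0
  -- choice of ρ₁
  have hγ' : (0:ℝ) < γ₂ - 1 := by linarith
  set ρ₁ : ℝ := ρ₀ * 2 ^ (2/(γ₂-1)) with hρ₁def
  have htwo : (1:ℝ) ≤ 2 ^ (2/(γ₂-1)) :=
    Real.one_le_rpow one_le_two (div_nonneg (by norm_num) hγ'.le)
  have hρ₀ρ₁ : ρ₀ ≤ ρ₁ := by
    rw [hρ₁def]
    nlinarith
  have hρ₁pos : 0 < ρ₁ := lt_of_lt_of_le hρ₀pos hρ₀ρ₁
  have hρ₁S : ρS ≤ ρ₁ := le_trans hρ₀S.le hρ₀ρ₁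
  clear_value ρ₁
  have hpow2 : ∀ r : ℝ, ρ₁ ^ r = ρ₀ ^ r * 2 ^ (2*r/(γ₂-1)) := by
    intro r
    rw [hρ₁def, Real.mul_rpow hρ₀pos.le (Real.rpow_nonneg (by norm_num) _),
      ← Real.rpow_mul (by norm_num : (0:ℝ) ≤ 2)]
    congr 2
    ring
  have h2a : ρ₀ ^ (γ₂-1) * 2 ≤ ρ₁ ^ (γ₂-1) := by
    rw [hpow2 (γ₂-1)]
    have e2 : 2*(γ₂-1)/(γ₂-1) = ((2:ℕ):ℝ) := by
      push_cast
      field_simp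
    rw [e2, Real.rpow_natCast]
    nlinarith [Real.rpow_pos_of_pos hρ₀pos (γ₂-1)]
  have h2b : ρ₀ ^ ((γ₂-1)/2) * 2 ≤ ρ₁ ^ ((γ₂-1)/2) := by
    rw [hpow2 ((γ₂-1)/2)]
    have e2 : 2*((γ₂-1)/2)/(γ₂-1) = (1:ℝ) := by field_simp
    rw [e2, Real.rpow_one]
  -- the constant
  set Ce : ℝ := internalEnergy P ρ₀ + 3*κ₂/(2*(γ₂-1)) with hCedef
  set CK : ℝ := Kfun P ρ₀ + Real.sqrt (2*κ₂*γ₂) * (2/(γ₂-1)) with hCKdef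
  set C : ℝ := 1 + ((κ₂/2)⁻¹ + 3*κ₂/2) + ((κ₂*γ₂/4)⁻¹ + 2*κ₂*γ₂)
      + ((κ₂/(4*(γ₂-1)))⁻¹ + Ce) + ((Real.sqrt (κ₂*γ₂/4)/(γ₂-1))⁻¹ + CK) with hCdef
  clear_value Ce CK C
  have hc1 : (0:ℝ) < κ₂/2 := by linarith
  have hc2 : (0:ℝ) < κ₂*γ₂/4 := by nlinarith
  have hc3 : (0:ℝ) < κ₂/(4*(γ₂-1)) := div_pos hκ₂ (by linarith)
  have hs5 : (0:ℝ) < Real.sqrt (κ₂*γ₂/4) := Real.sqrt_pos.2 hc2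
  have hc5 : (0:ℝ) < Real.sqrt (κ₂*γ₂/4)/(γ₂-1) := div_pos hs5 hγ'
  have hsK : (0:ℝ) ≤ Real.sqrt (2*κ₂*γ₂) := Real.sqrt_nonneg _
  have hCe0 : (0:ℝ) ≤ Ce := by
    rw [hCedef]
    have : (0:ℝ) < 3*κ₂/(2*(γ₂-1)) := div_pos (by linarith) (by linarith)
    linarith
  have hCK0 : (0:ℝ) ≤ CK := by
    rw [hCKdef]
    have h1 : (0:ℝ) ≤ Real.sqrt (2*κ₂*γ₂) * (2/(γ₂-1)) :=
      mul_nonneg hsK (div_nonneg (by norm_num) hγ'.le)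
    linarith
  have hi1 : (0:ℝ) < (κ₂/2)⁻¹ := inv_pos.2 hc1
  have hi2 : (0:ℝ) < (κ₂*γ₂/4)⁻¹ := inv_pos.2 hc2
  have hi3 : (0:ℝ) < (κ₂/(4*(γ₂-1)))⁻¹ := inv_pos.2 hc3
  have hi5 : (0:ℝ) < (Real.sqrt (κ₂*γ₂/4)/(γ₂-1))⁻¹ := inv_pos.2 hc5
  have hd1 : (0:ℝ) < 3*κ₂/2 := by linarith
  have hd2 : (0:ℝ) < 2*κ₂*γ₂ := by nlinarith
  refine ⟨C, by rw [hCdef]; linarith, ρ₁, hρ₁S, ?_⟩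
  intro ρ hρ
  have hρ₀ρ : ρ₀ ≤ ρ := le_trans hρ₀ρ₁ hρ
  have hρpos : 0 < ρ := lt_of_lt_of_le hρ₀pos hρ₀ρ
  have hρ1 : (1:ℝ) ≤ ρ := le_trans hρ₀1 hρ₀ρ
  obtain ⟨hp1, hp2⟩ := hPbig ρ hρ₀ρ
  obtain ⟨hq1, hq2⟩ := hP'big ρ hρ₀ρ
  have hsub : Icc ρ₀ ρ ⊆ Ioi (0:ℝ) := fun y hy => lt_of_lt_of_le hρ₀pos hy.1
  have hsub' : uIcc ρ₀ ρ ⊆ Ioi (0:ℝ) := by rw [uIcc_of_le hρ₀ρ]; exact hsub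
  have hg_int1 : IntervalIntegrable (fun y => P y / y ^ 2) volume ρ₀ ρ :=
    (hg_cont.mono hsub').intervalIntegrable
  have hk_int1 : IntervalIntegrable (fun y => Real.sqrt (deriv P y) / y) volume ρ₀ ρ :=
    (hk_cont.mono hsub').intervalIntegrable
  have hIE : ∀ t : ℝ, internalEnergy P t = ∫ y in (0:ℝ)..t, P y / y ^ 2 := fun _ => rfl
  have hKE : ∀ t : ℝ, Kfun P t = ∫ y in (0:ℝ)..t, Real.sqrt (deriv P y) / y := fun _ => rfl
  have hsplit : internalEnergy P ρ = internalEnergy P ρ₀ + ∫ y in ρ₀..ρ, P y / y ^ 2 := by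
    rw [hIE, hIE, intervalIntegral.integral_add_adjacent_intervals hg_int0 hg_int1]
  have hksplit : Kfun P ρ = Kfun P ρ₀ + ∫ y in ρ₀..ρ, Real.sqrt (deriv P y) / y := by
    rw [hKE, hKE, intervalIntegral.integral_add_adjacent_intervals hk_int0 hk_int1]
  -- pointwise bounds on [ρ₀, ρ]
  have hlow : ∀ y ∈ Icc ρ₀ ρ, κ₂/2 * y ^ (γ₂-2) ≤ P y / y ^ 2 := by
    intro y hy
    have hy0 : 0 < y := hsub hy
    calc κ₂/2 * y ^ (γ₂-2) = κ₂/2 * y ^ γ₂ / y ^ 2 := by rw [mul_div_assoc, aux_div_sq hy0]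
      _ ≤ P y / y ^ 2 := (div_le_div_iff_of_pos_right (pow_pos hy0 2)).2 (hPbig y hy.1).1
  have hup : ∀ y ∈ Icc ρ₀ ρ, P y / y ^ 2 ≤ 3*κ₂/2 * y ^ (γ₂-2) := by
    intro y hy
    have hy0 : 0 < y := hsub hy
    calc P y / y ^ 2 ≤ 3*κ₂/2 * y ^ γ₂ / y ^ 2 :=
          (div_le_div_iff_of_pos_right (pow_pos hy0 2)).2 (hPbig y hy.1).2
      _ = 3*κ₂/2 * y ^ (γ₂-2) := by rw [mul_div_assoc, aux_div_sq hy0]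
  have hklow : ∀ y ∈ Icc ρ₀ ρ,
      Real.sqrt (κ₂*γ₂/4) * y ^ ((γ₂-3)/2) ≤ Real.sqrt (deriv P y) / y := by
    intro y hy
    have hy0 : 0 < y := hsub hy
    have h2 : Real.sqrt (κ₂*γ₂/4 * y ^ (γ₂-1)) ≤ Real.sqrt (deriv P y) :=
      Real.sqrt_le_sqrt (hP'big y hy.1).1
    calc Real.sqrt (κ₂*γ₂/4) * y ^ ((γ₂-3)/2)
        = Real.sqrt (κ₂*γ₂/4 * y ^ (γ₂-1)) / y := by
          rw [aux_sqrt_rpow hc2.le hy0.le,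
            mul_div_assoc (Real.sqrt (κ₂*γ₂/4)) (y ^ ((γ₂-1)/2)) y, aux_div_self hy0]
          congr 2
          ring
      _ ≤ Real.sqrt (deriv P y) / y := (div_le_div_iff_of_pos_right hy0).2 h2
  have hkup : ∀ y ∈ Icc ρ₀ ρ,
      Real.sqrt (deriv P y) / y ≤ Real.sqrt (2*κ₂*γ₂) * y ^ ((γ₂-3)/2) := by
    intro y hy
    have hy0 : 0 < y := hsub hy
    have h2 : Real.sqrt (deriv P y) ≤ Real.sqrt (2*κ₂*γ₂ * y ^ (γ₂-1)) :=
      Real.sqrt_le_sqrt (hP'big y hy.1).2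
    calc Real.sqrt (deriv P y) / y ≤ Real.sqrt (2*κ₂*γ₂ * y ^ (γ₂-1)) / y :=
          (div_le_div_iff_of_pos_right hy0).2 h2
      _ = Real.sqrt (2*κ₂*γ₂) * y ^ ((γ₂-3)/2) := by
          rw [aux_sqrt_rpow hd2.le hy0.le, mul_div_assoc, aux_div_self hy0]
          congr 2
          ring
  -- integral comparisons
  have hrint : ∀ c : ℝ, IntervalIntegrable (fun y => c * y ^ (γ₂-2)) volume ρ₀ ρ :=
    fun c => (intervalIntegral.intervalIntegrable_rpow' (by linarith)).const_mul c
  have hrintK : ∀ c : ℝ, IntervalIntegrable (fun y => c * y ^ ((γ₂-3)/2)) volume ρ₀ ρ :=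
    fun c => (intervalIntegral.intervalIntegrable_rpow' (by linarith)).const_mul c
  have hI1 : (∫ y in ρ₀..ρ, κ₂/2 * y ^ (γ₂-2)) ≤ ∫ y in ρ₀..ρ, P y / y ^ 2 :=
    intervalIntegral.integral_mono_on hρ₀ρ (hrint _) hg_int1 hlow
  have hI2 : (∫ y in ρ₀..ρ, P y / y ^ 2) ≤ ∫ y in ρ₀..ρ, 3*κ₂/2 * y ^ (γ₂-2) :=
    intervalIntegral.integral_mono_on hρ₀ρ hg_int1 (hrint _) hup
  have hKI1 : (∫ y in ρ₀..ρ, Real.sqrt (κ₂*γ₂/4) * y ^ ((γ₂-3)/2)) ≤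
      ∫ y in ρ₀..ρ, Real.sqrt (deriv P y) / y :=
    intervalIntegral.integral_mono_on hρ₀ρ (hrintK _) hk_int1 hklow
  have hKI2 : (∫ y in ρ₀..ρ, Real.sqrt (deriv P y) / y) ≤
      ∫ y in ρ₀..ρ, Real.sqrt (2*κ₂*γ₂) * y ^ ((γ₂-3)/2) :=
    intervalIntegral.integral_mono_on hρ₀ρ hk_int1 (hrintK _) hkup
  have hval : ∀ c : ℝ, (∫ y in ρ₀..ρ, c * y ^ (γ₂-2)) =
      c * ((ρ ^ (γ₂-1) - ρ₀ ^ (γ₂-1)) / (γ₂-1)) := by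
    intro c
    rw [aux_rpow_int (by linarith : (-1:ℝ) < γ₂-2), show γ₂-2+1 = γ₂-1 from by ring]
  have hvalK : ∀ c : ℝ, (∫ y in ρ₀..ρ, c * y ^ ((γ₂-3)/2)) =
      c * ((ρ ^ ((γ₂-1)/2) - ρ₀ ^ ((γ₂-1)/2)) / ((γ₂-1)/2)) := by
    intro c
    rw [aux_rpow_int (by linarith : (-1:ℝ) < (γ₂-3)/2),
      show (γ₂-3)/2+1 = (γ₂-1)/2 from by ring]
  rw [hval] at hI1 hI2
  rw [hvalK] at hKI1 hKI2
  -- halving estimates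
  have hXmono : ρ₁ ^ (γ₂-1) ≤ ρ ^ (γ₂-1) := Real.rpow_le_rpow hρ₁pos.le hρ hγ'.le
  have hXmono2 : ρ₁ ^ ((γ₂-1)/2) ≤ ρ ^ ((γ₂-1)/2) :=
    Real.rpow_le_rpow hρ₁pos.le hρ (by linarith)
  have hhalf : ρ₀ ^ (γ₂-1) ≤ ρ ^ (γ₂-1) / 2 := by linarith
  have hhalf2 : ρ₀ ^ ((γ₂-1)/2) ≤ ρ ^ ((γ₂-1)/2) / 2 := by linarith
  have hX1 : (1:ℝ) ≤ ρ ^ (γ₂-1) := Real.one_le_rpow hρ1 hγ'.le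
  have hX12 : (1:ℝ) ≤ ρ ^ ((γ₂-1)/2) := Real.one_le_rpow hρ1 (by linarith)
  have hY0 : (0:ℝ) ≤ ρ₀ ^ (γ₂-1) := (Real.rpow_pos_of_pos hρ₀pos _).le
  have hY02 : (0:ℝ) ≤ ρ₀ ^ ((γ₂-1)/2) := (Real.rpow_pos_of_pos hρ₀pos _).le
  -- internal energy bounds
  have hel : κ₂/(4*(γ₂-1)) * ρ ^ (γ₂-1) ≤ internalEnergy P ρ := by
    have key := aux_frac (κ := κ₂) (g := γ₂-1) (X := ρ ^ (γ₂-1)) (Y := ρ₀ ^ (γ₂-1)) hκ₂.le hγ' hhalf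
    rw [hsplit]
    linarith
  have heu : internalEnergy P ρ ≤ Ce * ρ ^ (γ₂-1) := by
    have key := aux_frac2 (κ := 3*κ₂) (g := γ₂-1) (X := ρ ^ (γ₂-1)) (Y := ρ₀ ^ (γ₂-1)) (by linarith) hγ' hY0
    have h'' : internalEnergy P ρ₀ ≤ internalEnergy P ρ₀ * ρ ^ (γ₂-1) :=
      le_mul_of_one_le_right he₀ hX1
    rw [hsplit, hCedef]
    have hexpand : (internalEnergy P ρ₀ + 3*κ₂/(2*(γ₂-1))) * ρ ^ (γ₂-1) =
        internalEnergy P ρ₀ * ρ ^ (γ₂-1) + 3*κ₂/(2*(γ₂-1)) * ρ ^ (γ₂-1) := by ring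
    rw [hexpand]
    linarith
  -- derivative of the internal energy
  have hder : deriv (internalEnergy P) ρ = P ρ / ρ ^ 2 := by
    have H := intervalIntegral.integral_hasDerivAt_right (hg_int0.trans hg_int1)
      (ContinuousOn.stronglyMeasurableAtFilter isOpen_Ioi hg_cont ρ hρpos)
      (hg_cont.continuousAt (Ioi_mem_nhds hρpos))
    have hfun : internalEnergy P = fun u => ∫ y in (0:ℝ)..u, P y / y ^ 2 := rfl
    rw [hfun]
    exact H.deriv
  have hdl : κ₂/2 * ρ ^ (γ₂-2) ≤ deriv (internalEnergy P) ρ := by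
    rw [hder]
    exact hlow ρ ⟨hρ₀ρ, le_rfl⟩
  have hdu : deriv (internalEnergy P) ρ ≤ 3*κ₂/2 * ρ ^ (γ₂-2) := by
    rw [hder]
    exact hup ρ ⟨hρ₀ρ, le_rfl⟩
  -- K bounds
  have hkl : Real.sqrt (κ₂*γ₂/4)/(γ₂-1) * ρ ^ ((γ₂-1)/2) ≤ Kfun P ρ := by
    have e1 : Real.sqrt (κ₂*γ₂/4) * ((ρ ^ ((γ₂-1)/2) - ρ₀ ^ ((γ₂-1)/2))/((γ₂-1)/2))
        - Real.sqrt (κ₂*γ₂/4)/(γ₂-1) * ρ ^ ((γ₂-1)/2)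
        = Real.sqrt (κ₂*γ₂/4) * (2*(ρ ^ ((γ₂-1)/2) - ρ₀ ^ ((γ₂-1)/2)) - ρ ^ ((γ₂-1)/2))
          / (γ₂-1) := by
      field_simp
    have e2 : (0:ℝ) ≤ Real.sqrt (κ₂*γ₂/4) *
        (2*(ρ ^ ((γ₂-1)/2) - ρ₀ ^ ((γ₂-1)/2)) - ρ ^ ((γ₂-1)/2)) / (γ₂-1) :=
      div_nonneg (mul_nonneg hs5.le (by linarith)) hγ'.le
    rw [hksplit]
    linarith
  have hku : Kfun P ρ ≤ CK * ρ ^ ((γ₂-1)/2) := by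
    have e1 : Real.sqrt (2*κ₂*γ₂) * (2/(γ₂-1)) * ρ ^ ((γ₂-1)/2)
        - Real.sqrt (2*κ₂*γ₂) * ((ρ ^ ((γ₂-1)/2) - ρ₀ ^ ((γ₂-1)/2))/((γ₂-1)/2))
        = Real.sqrt (2*κ₂*γ₂) * 2 * ρ₀ ^ ((γ₂-1)/2) / (γ₂-1) := by
      field_simp
      ring
    have e2 : (0:ℝ) ≤ Real.sqrt (2*κ₂*γ₂) * 2 * ρ₀ ^ ((γ₂-1)/2) / (γ₂-1) :=
      div_nonneg (mul_nonneg (mul_nonneg hsK (by norm_num)) hY02) hγ'.le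
    have h'' : Kfun P ρ₀ ≤ Kfun P ρ₀ * ρ ^ ((γ₂-1)/2) := le_mul_of_one_le_right hK₀ hX12
    rw [hksplit, hCKdef]
    have hexpand : (Kfun P ρ₀ + Real.sqrt (2*κ₂*γ₂) * (2/(γ₂-1))) * ρ ^ ((γ₂-1)/2) =
        Kfun P ρ₀ * ρ ^ ((γ₂-1)/2)
          + Real.sqrt (2*κ₂*γ₂) * (2/(γ₂-1)) * ρ ^ ((γ₂-1)/2) := by ring
    rw [hexpand]
    linarith
  -- assemble
  have HP := aux_combine (C := C) hc1 (by rw [hCdef]; linarith) (by rw [hCdef]; linarith)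
    (Real.rpow_pos_of_pos hρpos γ₂).le hp1 hp2
  have HQ := aux_combine (C := C) hc2 (by rw [hCdef]; linarith) (by rw [hCdef]; linarith)
    (Real.rpow_pos_of_pos hρpos (γ₂-1)).le hq1 hq2
  have HE := aux_combine (C := C) hc3 (by rw [hCdef]; linarith) (by rw [hCdef]; linarith)
    (Real.rpow_pos_of_pos hρpos (γ₂-1)).le hel heu
  have HD := aux_combine (C := C) hc1 (by rw [hCdef]; linarith) (by rw [hCdef]; linarith)
    (Real.rpow_pos_of_pos hρpos (γ₂-2)).le hdl hdu
  have HK := aux_combine (C := C) hc5 (by rw [hCdef]; linarith) (by rw [hCdef]; linarith)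
    (Real.rpow_pos_of_pos hρpos ((γ₂-1)/2)).le hkl hku
  exact ⟨HP.1, HP.2, HQ.1, HQ.2, HE.1, HE.2, HD.1, HD.2, HK.1, HK.2⟩
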